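/- Let T be a tree with exactly one core v, where v has at least three g-legs, and let L ⊆ V be a set that contains a local set for v. If L contains at least one vertex of each g-leg of v, then L is a landmark set of T. -/

import Mathlib

open SimpleGraph

variable {V : Type*} [Fintype V] [DecidableEq V]

/-- A vertex `τ` separates `u` and `w` if its distances to them differ. -/
def Separates (T : SimpleGraph V) (τ u w : V) : Prop :=
  T.dist τ u ≠ T.dist τ w

/-- There are at least two vertices of `L` separating `u` and `w`. -/
def HasTwoSeparators (T : SimpleGraph V) (L : Set V) (u w : V) : Prop :=
  ∃ τ₁ ∈ L, ∃ τ₂ ∈ L, τ₁ ≠ τ₂ ∧ Separates T τ₁ u w ∧ Separates T τ₂ u w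

/-- `L` is a landmark set (non-landmarks model, `k = 2`): every pair of distinct
vertices outside `L` is separated by at least two vertices of `L`. -/
def IsLandmarkSet (T : SimpleGraph V) (L : Set V) : Prop :=
  ∀ u w : V, u ≠ w → u ∉ L → w ∉ L → HasTwoSeparators T L u w

/-- A core is a vertex of degree at least 3. -/
def IsCore (T : SimpleGraph V) [DecidableRel T.Adj] (v : V) : Prop :=
  3 ≤ T.degree v

/-- The subtree of the neighbor `x` of `v`: in a tree, the connected component of `x`
obtained by removing `v`, characterized via distances (`w` is in it iff the path from
`v` to `w` passes through `x`). -/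
def Branch (T : SimpleGraph V) (v x : V) : Set V :=
  {w | T.dist v w = T.dist x w + 1}

/-- The subtree of the neighbor `x` of `v` is a (standard) leg:
a path containing no cores. -/
def IsStandardLeg (T : SimpleGraph V) [DecidableRel T.Adj] (v x : V) : Prop :=
  T.Adj v x ∧ ∀ w ∈ Branch T v x, T.degree w ≤ 2

/-- A short leg consists of a single vertex. -/
def IsShortLeg (T : SimpleGraph V) [DecidableRel T.Adj] (v x : V) : Prop :=
  IsStandardLeg T v x ∧ Branch T v x = {x}

/-- A long leg is a standard leg that is not short. -/
def IsLongLeg (T : SimpleGraph V) [DecidableRel T.Adj] (v x : V) : Prop :=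
  IsStandardLeg T v x ∧ Branch T v x ≠ {x}

/-- A small core: degree exactly 3, with at least two standard legs, one of which is short. -/
def IsSmallCore (T : SimpleGraph V) [DecidableRel T.Adj] (v : V) : Prop :=
  T.degree v = 3 ∧ ∃ x y : V, x ≠ y ∧ IsShortLeg T v x ∧ IsStandardLeg T v y

/-- A regular core is a core that is not small. -/
def IsRegularCore (T : SimpleGraph V) [DecidableRel T.Adj] (v : V) : Prop :=
  IsCore T v ∧ ¬ IsSmallCore T v

/-- A modified leg of `v`: a subtree of a neighbor of `v` containing exactly one core,
which is a small core. -/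
def IsModifiedLeg (T : SimpleGraph V) [DecidableRel T.Adj] (v x : V) : Prop :=
  T.Adj v x ∧ ∃ u ∈ Branch T v x, IsSmallCore T u ∧
    ∀ w ∈ Branch T v x, IsCore T w → w = u

/-- A g-leg is a standard leg or a modified leg. -/
def IsGLeg (T : SimpleGraph V) [DecidableRel T.Adj] (v x : V) : Prop :=
  IsStandardLeg T v x ∨ IsModifiedLeg T v x

/-- A minor core: a regular core which either (i) has at most one g-leg, or
(ii) has degree at least 4, no modified legs, exactly two standard legs one of which
is short, and every other subtree of a neighbor contains a regular core. -/
def IsMinorCore (T : SimpleGraph V) [DecidableRel T.Adj] (v : V) : Prop :=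
  IsRegularCore T v ∧
  ((∀ x y : V, IsGLeg T v x → IsGLeg T v y → x = y) ∨
   (4 ≤ T.degree v ∧ (∀ x : V, ¬ IsModifiedLeg T v x) ∧
    (∃ x y : V, x ≠ y ∧ IsShortLeg T v x ∧ IsStandardLeg T v y ∧
      ∀ z : V, IsStandardLeg T v z → z = x ∨ z = y) ∧
    (∀ z : V, T.Adj v z → ¬ IsGLeg T v z → ∃ w ∈ Branch T v z, IsRegularCore T w)))

/-- A main core is a regular core that is not minor. -/
def IsMainCore (T : SimpleGraph V) [DecidableRel T.Adj] (v : V) : Prop :=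
  IsRegularCore T v ∧ ¬ IsMinorCore T v

/-- The vertices lying on g-legs of `v`. -/
def GLegVerts (T : SimpleGraph V) [DecidableRel T.Adj] (v : V) : Set V :=
  {w | ∃ x : V, IsGLeg T v x ∧ w ∈ Branch T v x}

/-- Type (s,0) solution on the leg of neighbor `x` of `v`: the empty set. -/
def SolS0 (T : SimpleGraph V) (v x : V) (S : Set V) : Prop :=
  S ∩ Branch T v x = ∅

/-- Type (s,1) solution: one vertex of the leg whose position is at least 2. -/
def SolS1 (T : SimpleGraph V) (v x : V) (S : Set V) : Prop :=
  ∃ w : V, S ∩ Branch T v x = {w} ∧ 2 ≤ T.dist v w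

/-- Type (s,2) solution: at least two vertices of the leg. -/
def SolS2 (T : SimpleGraph V) (v x : V) (S : Set V) : Prop :=
  ∃ w₁ ∈ S ∩ Branch T v x, ∃ w₂ ∈ S ∩ Branch T v x, w₁ ≠ w₂

/-- Type (s,3) solution: exactly the vertex with position 1 (that is, `x`). -/
def SolS3 (T : SimpleGraph V) (v x : V) (S : Set V) : Prop :=
  S ∩ Branch T v x = {x}

/-- For a modified leg `x` of `v`: `u` is its small core (at position `T.dist v u`),
and `a`, `b` are the two vertices at position `T.dist v u + 1`, where `b` is the
vertex of a short leg of `u` (the vertex `ℓ^b`) and `a` is the other one (`ℓ^a`). -/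
def MLegPair (T : SimpleGraph V) [DecidableRel T.Adj] (v x u a b : V) : Prop :=
  u ∈ Branch T v x ∧ IsSmallCore T u ∧ a ≠ b ∧
  a ∈ Branch T v x ∧ b ∈ Branch T v x ∧
  T.dist v a = T.dist v u + 1 ∧ T.dist v b = T.dist v u + 1 ∧
  IsShortLeg T u b

/-- Type (m,1) solution on the modified leg `x` of `v`: either `{ℓ^a}` or `{ℓ^b}`. -/
def SolM1 (T : SimpleGraph V) [DecidableRel T.Adj] (v x : V) (S : Set V) : Prop :=
  ∃ u a b : V, MLegPair T v x u a b ∧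
    (S ∩ Branch T v x = {a} ∨ S ∩ Branch T v x = {b})

/-- Type (m,2) solution: contains neither `ℓ^a` nor `ℓ^b`, contains at least two
vertices of positions at least `i + 2`, and no vertex of position `i + 1`. -/
def SolM2 (T : SimpleGraph V) [DecidableRel T.Adj] (v x : V) (S : Set V) : Prop :=
  ∃ u a b : V, MLegPair T v x u a b ∧ a ∉ S ∧ b ∉ S ∧
    (∃ w₁ ∈ S ∩ Branch T v x, ∃ w₂ ∈ S ∩ Branch T v x, w₁ ≠ w₂ ∧
      T.dist v u + 2 ≤ T.dist v w₁ ∧ T.dist v u + 2 ≤ T.dist v w₂) ∧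
    ∀ w ∈ S ∩ Branch T v x, T.dist v w ≠ T.dist v u + 1

/-- Type (m,3) solution: at least two vertices, one of which is `ℓ^a` or `ℓ^b`. -/
def SolM3 (T : SimpleGraph V) [DecidableRel T.Adj] (v x : V) (S : Set V) : Prop :=
  ∃ u a b : V, MLegPair T v x u a b ∧
    (∃ w₁ ∈ S ∩ Branch T v x, ∃ w₂ ∈ S ∩ Branch T v x, w₁ ≠ w₂) ∧
    (a ∈ S ∨ b ∈ S)

/-- `S` is a local set for the core `v`. -/
def IsLocalSet (T : SimpleGraph V) [DecidableRel T.Adj] (v : V) (S : Set V) : Prop :=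
  S ⊆ GLegVerts T v ∧
  -- (1) at most one standard leg has a type (s,0) solution, and every standard leg
  -- has a solution of one of the types (s,0), (s,1), (s,2), (s,3)
  (∀ x y : V, IsStandardLeg T v x → IsStandardLeg T v y → x ≠ y →
    SolS0 T v x S → SolS0 T v y S → False) ∧
  (∀ x : V, IsStandardLeg T v x →
    SolS0 T v x S ∨ SolS1 T v x S ∨ SolS2 T v x S ∨ SolS3 T v x S) ∧
  -- (2) every modified leg has a solution of type (m,1), (m,2) or (m,3)
  (∀ x : V, IsModifiedLeg T v x →
    SolM1 T v x S ∨ SolM2 T v x S ∨ SolM3 T v x S) ∧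
  -- (3) if some standard leg has a type (s,0) solution, no modified leg has type (m,1)
  ((∃ x : V, IsStandardLeg T v x ∧ SolS0 T v x S) →
    ∀ y : V, IsModifiedLeg T v y → ¬ SolM1 T v y S) ∧
  -- (4) if some long leg has a type (s,0) solution, every other long leg has type (s,2)
  (∀ x : V, IsLongLeg T v x → SolS0 T v x S →
    ∀ y : V, IsLongLeg T v y → y ≠ x → SolS2 T v y S) ∧
  -- (5) if some short leg has a type (s,0) solution, every long leg has type (s,2) or (s,3)
  ((∃ x : V, IsShortLeg T v x ∧ SolS0 T v x S) →
    ∀ y : V, IsLongLeg T v y → SolS2 T v y S ∨ SolS3 T v y S)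

/-- A local set is thrifty if its solutions of types (s,2), (m,2) and (m,3)
consist of exactly two vertices each. -/
def IsThrifty (T : SimpleGraph V) [DecidableRel T.Adj] (v : V) (S : Set V) : Prop :=
  (∀ x : V, IsStandardLeg T v x → SolS2 T v x S → (S ∩ Branch T v x).ncard = 2) ∧
  (∀ x : V, IsModifiedLeg T v x → (SolM2 T v x S ∨ SolM3 T v x S) →
    (S ∩ Branch T v x).ncard = 2)

set_option linter.unusedSectionVars false

lemma dcomm (T : SimpleGraph V) (a b : V) : T.dist a b = T.dist b a :=
  SimpleGraph.dist_comm

section TreeLemmas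

variable {T : SimpleGraph V}

/-- In a tree, adjacent vertices have different distances to any vertex. -/
lemma tree_adj_dist_ne (hT : T.IsTree) {a b : V} (hab : T.Adj a b) (w : V) :
    T.dist a w ≠ T.dist b w := by
  intro h
  obtain ⟨p, hp, hpl⟩ := hT.isConnected.exists_path_of_dist a w
  obtain ⟨q, hq, hql⟩ := hT.isConnected.exists_path_of_dist b w
  have hav : a ∉ q.support := by
    intro ha
    have h1 := SimpleGraph.dist_le (q.dropUntil a ha)
    have h2 := congrArg Walk.length (q.take_spec ha)
    rw [Walk.length_append] at h2
    have h3 : (q.takeUntil a ha).length ≠ 0 := by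
      intro h0
      exact hab.ne' (Walk.eq_of_length_eq_zero h0)
    omega
  have hP2 : (Walk.cons hab q).IsPath := hq.cons hav
  have := hT.IsAcyclic.path_unique ⟨p, hp⟩ ⟨Walk.cons hab q, hP2⟩
  have hlen := congrArg Walk.length (congrArg Subtype.val this)
  simp only [Walk.length_cons] at hlen
  omega

/-- Distances to adjacent vertices differ by exactly one. -/
lemma tree_adj_dist (hT : T.IsTree) {a b : V} (hab : T.Adj a b) (w : V) :
    T.dist b w = T.dist a w + 1 ∨ T.dist a w = T.dist b w + 1 := by
  have h1 : T.dist a w ≤ T.dist a b + T.dist b w := hT.isConnected.dist_triangle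
  have h2 : T.dist b w ≤ T.dist b a + T.dist a w := hT.isConnected.dist_triangle
  have hab1 : T.dist a b = 1 := dist_eq_one_iff_adj.mpr hab
  have hba1 : T.dist b a = 1 := dist_eq_one_iff_adj.mpr hab.symm
  have := tree_adj_dist_ne hT hab w
  omega

/-- Every vertex other than `v` lies in the branch of some neighbor of `v`. -/
lemma branch_cover (hT : T.IsTree) {v w : V} (hw : w ≠ v) :
    ∃ x, T.Adj v x ∧ w ∈ Branch T v x := by
  have hd : 0 < T.dist v w :=
    hT.isConnected.pos_dist_of_ne (Ne.symm hw)
  obtain ⟨p, hpl⟩ := hT.isConnected.exists_walk_length_eq_dist v w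
  cases p with
  | nil => rw [SimpleGraph.dist_self] at hd; omega
  | cons h q =>
    rename_i x
    refine ⟨x, h, ?_⟩
    have h1 : T.dist x w ≤ q.length := SimpleGraph.dist_le q
    have h2 : T.dist v w ≤ T.dist v x + T.dist x w := hT.isConnected.dist_triangle
    have h3 : T.dist v x = 1 := dist_eq_one_iff_adj.mpr h
    simp only [Walk.length_cons] at hpl
    show T.dist v w = T.dist x w + 1
    omega

/-- Branches of distinct neighbors are disjoint. -/
lemma branch_disjoint (hT : T.IsTree) {v x y w : V} (hx : T.Adj v x) (hy : T.Adj v y)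
    (hwx : w ∈ Branch T v x) (hwy : w ∈ Branch T v y) : x = y := by
  have hwx' : T.dist v w = T.dist x w + 1 := hwx
  have hwy' : T.dist v w = T.dist y w + 1 := hwy
  obtain ⟨q, hq, hql⟩ := hT.isConnected.exists_path_of_dist x w
  obtain ⟨r, hr, hrl⟩ := hT.isConnected.exists_path_of_dist y w
  have hvq : v ∉ q.support := by
    intro hv
    have h1 := SimpleGraph.dist_le (q.dropUntil v hv)
    have h2 := q.length_dropUntil_le hv
    omega
  have hvr : v ∉ r.support := by
    intro hv
    have h1 := SimpleGraph.dist_le (r.dropUntil v hv)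
    have h2 := r.length_dropUntil_le hv
    omega
  have hP1 : (Walk.cons hx q).IsPath := hq.cons hvq
  have hP2 : (Walk.cons hy r).IsPath := hr.cons hvr
  have heq := hT.IsAcyclic.path_unique ⟨Walk.cons hx q, hP1⟩ ⟨Walk.cons hy r, hP2⟩
  have hsupp := congrArg Walk.support (congrArg Subtype.val heq)
  rw [Walk.support_cons, Walk.support_cons, q.support_eq_cons, r.support_eq_cons] at hsupp
  simp only [List.cons.injEq] at hsupp
  exact hsupp.2.1

/-- Branches are closed under adjacency, except through `v`. -/
lemma branch_closed (hT : T.IsTree) {v y a b : V} (hy : T.Adj v y)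
    (ha : a ∈ Branch T v y) (hab : T.Adj a b) (hbv : b ≠ v) : b ∈ Branch T v y := by
  have ha' : T.dist v a = T.dist y a + 1 := ha
  show T.dist v b = T.dist y b + 1
  rcases tree_adj_dist hT hab v with hc | hc
  · -- dist v b = dist v a + 1  (rewritten: dist b v etc, careful with order)
    -- hc : T.dist b v = T.dist a v + 1? No: tree_adj_dist gives dist b w = dist a w + 1 with w := v
    have h1 : T.dist y b ≤ T.dist y a + T.dist a b := hT.isConnected.dist_triangle
    have h2 : T.dist v b ≤ T.dist v y + T.dist y b := hT.isConnected.dist_triangle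
    have h3 : T.dist a b = 1 := dist_eq_one_iff_adj.mpr hab
    have h4 : T.dist v y = 1 := dist_eq_one_iff_adj.mpr hy
    rw [dcomm T b v, dcomm T a v] at hc
    omega
  · -- dist v a = dist v b + 1
    rw [dcomm T a v, dcomm T b v] at hc
    have hb0 : T.dist v b ≠ 0 := by
      intro h0
      exact hbv (hT.isConnected.dist_eq_zero_iff.mp ((dcomm T v b) ▸ h0)).symm
    have hda : 2 ≤ T.dist v a := by
      have : T.dist y a + 1 = T.dist v a := ha'.symm
      omega
    -- build the two paths from v to a
    obtain ⟨p, hp, hpl⟩ := hT.isConnected.exists_path_of_dist v b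
    obtain ⟨q, hq, hql⟩ := hT.isConnected.exists_path_of_dist y a
    have hanp : a ∉ p.support := by
      intro hmem
      have h1 := SimpleGraph.dist_le (p.takeUntil a hmem)
      have h2 := p.length_takeUntil_le hmem
      omega
    have hP1' : (Walk.cons hab p.reverse).IsPath := by
      rw [Walk.cons_isPath_iff]
      exact ⟨hp.reverse, by simpa using hanp⟩
    have hP1 : ((Walk.cons hab p.reverse).reverse).IsPath := hP1'.reverse
    have hvq : v ∉ q.support := by
      intro hmem
      have h1 := SimpleGraph.dist_le (q.dropUntil v hmem)
      have h2 := q.length_dropUntil_le hmem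
      omega
    have hP2 : (Walk.cons hy q).IsPath := hq.cons hvq
    have heq := hT.IsAcyclic.path_unique
      ⟨(Walk.cons hab p.reverse).reverse, hP1⟩ ⟨Walk.cons hy q, hP2⟩
    have heqw : (Walk.cons hab p.reverse).reverse = Walk.cons hy q :=
      congrArg Subtype.val heq
    -- b is in the support of the first path
    have hbmem : b ∈ ((Walk.cons hab p.reverse).reverse).support := by
      rw [Walk.support_reverse, List.mem_reverse, Walk.support_cons, List.mem_cons]
      right
      rw [Walk.support_reverse, List.mem_reverse]
      exact p.end_mem_support
    rw [heqw] at hbmem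
    rw [Walk.support_cons, List.mem_cons] at hbmem
    have hbq : b ∈ q.support := by
      rcases hbmem with h | h
      · exact absurd h hbv
      · exact h
    have h1 := SimpleGraph.dist_le (q.takeUntil b hbq)
    have h2 := q.length_takeUntil_le hbq
    -- so dist y b ≤ dist y a = dist v a - 1 = dist v b
    rcases tree_adj_dist hT hy b with hc2 | hc2 <;> omega

/-- A walk staying away from `v` stays in the branch. -/
lemma walk_in_branch (hT : T.IsTree) {v y : V} (hy : T.Adj v y) :
    ∀ {a u : V} (p : T.Walk a u), a ∈ Branch T v y → v ∉ p.support → u ∈ Branch T v y := by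
  intro a u p
  induction p with
  | nil => intro h _; exact h
  | cons hadj q ih =>
    intro ha hv
    rw [Walk.support_cons, List.mem_cons] at hv
    push_neg at hv
    have hb := branch_closed hT hy ha hadj (by
      intro h; exact hv.2 (h ▸ q.start_mem_support))
    exact ih hb hv.2

/-- Cross-branch distances add up through `v`. -/
lemma cross_dist (hT : T.IsTree) {v x y u τ : V} (hx : T.Adj v x) (hy : T.Adj v y)
    (hxy : x ≠ y) (hu : u ∈ Branch T v x) (hτ : τ ∈ Branch T v y) :
    T.dist τ u = T.dist v τ + T.dist v u := by
  have hle : T.dist τ u ≤ T.dist τ v + T.dist v u := hT.isConnected.dist_triangle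
  rw [dcomm T τ v] at hle
  obtain ⟨p, hpl⟩ := hT.isConnected.exists_walk_length_eq_dist τ u
  have hvmem : v ∈ p.support := by
    by_contra hvn
    have := walk_in_branch hT hy p hτ hvn
    exact hxy (branch_disjoint hT hx hy hu this)
  have h1 := SimpleGraph.dist_le (p.takeUntil v hvmem)
  have h2 := SimpleGraph.dist_le (p.dropUntil v hvmem)
  have h3 := congrArg Walk.length (p.take_spec hvmem)
  rw [Walk.length_append] at h3
  rw [dcomm T τ v] at h1
  omega

/-- Every vertex at positive distance from `v` has a predecessor. -/
lemma pred_exists (hT : T.IsTree) {v u : V} (hvu : u ≠ v) :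
    ∃ u', T.Adj u' u ∧ T.dist v u' + 1 = T.dist v u := by
  have hd : 0 < T.dist v u := hT.isConnected.pos_dist_of_ne (Ne.symm hvu)
  obtain ⟨p, hpl⟩ := hT.isConnected.exists_walk_length_eq_dist v u
  cases hrev : p.reverse with
  | nil =>
    exfalso
    have hl := congrArg Walk.length hrev
    rw [Walk.length_reverse] at hl
    simp only [Walk.length_nil] at hl
    omega
  | cons h q =>
    rename_i u'
    refine ⟨u', h.symm, ?_⟩
    have hql : q.length + 1 = T.dist v u := by
      have hl := congrArg Walk.length hrev
      rw [Walk.length_reverse, Walk.length_cons] at hl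
      omega
    have h1 : T.dist v u' ≤ q.length := by
      have := SimpleGraph.dist_le q.reverse
      rwa [Walk.length_reverse] at this
    have h2 : T.dist v u ≤ T.dist v u' + T.dist u' u := hT.isConnected.dist_triangle
    have h3 : T.dist u' u = 1 := dist_eq_one_iff_adj.mpr h.symm
    omega

/-- If every core equals `v`, distinct vertices in a branch have distinct positions. -/
lemma pos_inj (hT : T.IsTree) [DecidableRel T.Adj] {v x : V}
    (hdeg : ∀ z : V, 3 ≤ T.degree z → z = v) (hx : T.Adj v x) :
    ∀ (d : ℕ) (u w : V), T.dist v u = d → T.dist v w = d →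
      u ∈ Branch T v x → w ∈ Branch T v x → u = w := by
  intro d
  induction d with
  | zero =>
    intro u w hu hw hub hwb
    have hub' : T.dist v u = T.dist x u + 1 := hub
    omega
  | succ n ih =>
    intro u w hu hw hub hwb
    rcases Nat.eq_zero_or_pos n with hn | hn
    · subst hn
      have hub' : T.dist v u = T.dist x u + 1 := hub
      have hwb' : T.dist v w = T.dist x w + 1 := hwb
      have hxu : T.dist x u = 0 := by omega
      have hxw : T.dist x w = 0 := by omega
      have h1 := hT.isConnected.dist_eq_zero_iff.mp hxu
      have h2 := hT.isConnected.dist_eq_zero_iff.mp hxw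
      exact h1 ▸ h2
    · -- n ≥ 1, so dist v u = n + 1 ≥ 2
      have hunv : u ≠ v := by
        intro h; rw [h, SimpleGraph.dist_self] at hu; omega
      have hwnv : w ≠ v := by
        intro h; rw [h, SimpleGraph.dist_self] at hw; omega
      obtain ⟨u', hu'adj, hu'd⟩ := pred_exists hT hunv
      obtain ⟨w', hw'adj, hw'd⟩ := pred_exists hT hwnv
      have hu'nv : u' ≠ v := by
        intro h; rw [h, SimpleGraph.dist_self] at hu'd; omega
      have hw'nv : w' ≠ v := by
        intro h; rw [h, SimpleGraph.dist_self] at hw'd; omega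
      have hu'b : u' ∈ Branch T v x := branch_closed hT hx hub hu'adj.symm hu'nv
      have hw'b : w' ∈ Branch T v x := branch_closed hT hx hwb hw'adj.symm hw'nv
      have hz := ih u' w' (by omega) (by omega) hu'b hw'b
      subst hz
      -- u' = w' =: z; its predecessor z''
      obtain ⟨z'', hz''adj, hz''d⟩ := pred_exists hT hu'nv
      by_contra hneq
      have huz : u ≠ z'' := by
        intro h; rw [h] at hu; omega
      have hwz : w ≠ z'' := by
        intro h; rw [h] at hw; omega
      have hsub : ({u, w, z''} : Finset V) ⊆ T.neighborFinset u' := by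
        intro t ht
        simp only [Finset.mem_insert, Finset.mem_singleton] at ht
        rw [SimpleGraph.mem_neighborFinset]
        rcases ht with h | h | h
        · exact h ▸ hu'adj
        · exact h ▸ hw'adj
        · exact h ▸ hz''adj.symm
      have hcard : ({u, w, z''} : Finset V).card = 3 := by
        rw [Finset.card_insert_of_notMem (by simp [hneq, huz]),
          Finset.card_insert_of_notMem (by simp [hwz])]
        simp
      have hdeg3 : 3 ≤ T.degree u' := by
        rw [SimpleGraph.degree]
        calc 3 = ({u, w, z''} : Finset V).card := hcard.symm
        _ ≤ _ := Finset.card_le_card hsub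
      exact hu'nv (hdeg u' hdeg3)

end TreeLemmas

section MainAux

lemma hasTwoSeparators_symm {T : SimpleGraph V} {L : Set V} {u w : V}
    (h : HasTwoSeparators T L w u) : HasTwoSeparators T L u w := by
  obtain ⟨τ₁, h1, τ₂, h2, hne, hs1, hs2⟩ := h
  exact ⟨τ₁, h1, τ₂, h2, hne, Ne.symm hs1, Ne.symm hs2⟩

lemma main_aux {T : SimpleGraph V} [DecidableRel T.Adj] (hT : T.IsTree) {v : V}
    (hdeg : ∀ z : V, 3 ≤ T.degree z → z = v)
    {x₁ x₂ x₃ : V} (h12 : x₁ ≠ x₂) (h13 : x₁ ≠ x₃) (h23 : x₂ ≠ x₃)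
    (a1 : T.Adj v x₁) (a2 : T.Adj v x₂) (a3 : T.Adj v x₃)
    {L : Set V} (hland : ∀ x : V, T.Adj v x → ∃ τ ∈ L, τ ∈ Branch T v x)
    {u w : V} (hle : T.dist v u ≤ T.dist v w) (hne : u ≠ w) :
    HasTwoSeparators T L u w := by
  have pick2 : ∀ z : V, ∃ y₁ y₂ : V, y₁ ≠ y₂ ∧ y₁ ≠ z ∧ y₂ ≠ z ∧ T.Adj v y₁ ∧ T.Adj v y₂ := by
    intro z
    by_cases h1 : x₁ = z
    · refine ⟨x₂, x₃, h23, ?_, ?_, a2, a3⟩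
      · intro hh; exact h12 (h1.trans hh.symm)
      · intro hh; exact h13 (h1.trans hh.symm)
    · by_cases h2 : x₂ = z
      · refine ⟨x₁, x₃, h13, h1, ?_, a1, a3⟩
        intro hh; exact h23 (h2.trans hh.symm)
      · exact ⟨x₁, x₂, h12, h1, h2, a1, a2⟩
  have pick1 : ∀ z₁ z₂ : V, ∃ y, y ≠ z₁ ∧ y ≠ z₂ ∧ T.Adj v y := by
    intro z₁ z₂
    obtain ⟨y₁, y₂, hne', hz1, hz2, b1, b2⟩ := pick2 z₁
    by_cases hz : y₁ = z₂
    · exact ⟨y₂, hz2, fun hh => hne' (hz.trans hh.symm), b2⟩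
    · exact ⟨y₁, hz1, hz, b1⟩
  have hτne : ∀ {x y τ σ : V}, T.Adj v x → T.Adj v y → x ≠ y →
      τ ∈ Branch T v x → σ ∈ Branch T v y → τ ≠ σ := by
    intro x y τ σ hx hy hxy hτ hσ hh
    subst hh
    exact hxy (branch_disjoint hT hx hy hτ hσ)
  by_cases huv : u = v
  · have hwv : w ≠ v := fun hh => hne (huv.trans hh.symm)
    obtain ⟨xw, axw, hwb⟩ := branch_cover hT hwv
    obtain ⟨y₁, y₂, hy12, hy1, hy2, b1, b2⟩ := pick2 xw
    obtain ⟨τ₁, hτ₁L, hτ₁b⟩ := hland y₁ b1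
    obtain ⟨τ₂, hτ₂L, hτ₂b⟩ := hland y₂ b2
    refine ⟨τ₁, hτ₁L, τ₂, hτ₂L, hτne b1 b2 hy12 hτ₁b hτ₂b, ?_, ?_⟩
    · show T.dist τ₁ u ≠ T.dist τ₁ w
      rw [cross_dist hT axw b1 (fun hh => hy1 hh.symm) hwb hτ₁b]
      have h1 : T.dist v w = T.dist xw w + 1 := hwb
      rw [huv, dcomm T τ₁ v]
      omega
    · show T.dist τ₂ u ≠ T.dist τ₂ w
      rw [cross_dist hT axw b2 (fun hh => hy2 hh.symm) hwb hτ₂b]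
      have h1 : T.dist v w = T.dist xw w + 1 := hwb
      rw [huv, dcomm T τ₂ v]
      omega
  · have hwv : w ≠ v := by
      intro hh
      subst hh
      rw [SimpleGraph.dist_self] at hle
      exact huv (hT.isConnected.dist_eq_zero_iff.mp (by omega)).symm
    obtain ⟨xu, axu, hub⟩ := branch_cover hT huv
    obtain ⟨xw, axw, hwb⟩ := branch_cover hT hwv
    have hub' : T.dist v u = T.dist xu u + 1 := hub
    have hwb' : T.dist v w = T.dist xw w + 1 := hwb
    by_cases hxx : xu = xw
    · -- same branch
      subst hxx
      have hpq : T.dist v u ≠ T.dist v w := by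
        intro hh
        exact hne (pos_inj hT hdeg axu (T.dist v u) u w rfl hh.symm hub hwb)
      obtain ⟨y₁, y₂, hy12, hy1, hy2, b1, b2⟩ := pick2 xu
      obtain ⟨τ₁, hτ₁L, hτ₁b⟩ := hland y₁ b1
      obtain ⟨τ₂, hτ₂L, hτ₂b⟩ := hland y₂ b2
      refine ⟨τ₁, hτ₁L, τ₂, hτ₂L, hτne b1 b2 hy12 hτ₁b hτ₂b, ?_, ?_⟩
      · show T.dist τ₁ u ≠ T.dist τ₁ w
        rw [cross_dist hT axu b1 (fun hh => hy1 hh.symm) hub hτ₁b,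
          cross_dist hT axu b1 (fun hh => hy1 hh.symm) hwb hτ₁b]
        omega
      · show T.dist τ₂ u ≠ T.dist τ₂ w
        rw [cross_dist hT axu b2 (fun hh => hy2 hh.symm) hub hτ₂b,
          cross_dist hT axu b2 (fun hh => hy2 hh.symm) hwb hτ₂b]
        omega
    · -- different branches
      obtain ⟨τ₁, hτ₁L, hτ₁b⟩ := hland xu axu
      have hτ₁b' : T.dist v τ₁ = T.dist xu τ₁ + 1 := hτ₁b
      have hsep1 : T.dist τ₁ u ≠ T.dist τ₁ w := by
        rw [cross_dist hT axw axu (Ne.symm hxx) hwb hτ₁b]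
        have htri : T.dist τ₁ u ≤ T.dist τ₁ xu + T.dist xu u :=
          hT.isConnected.dist_triangle
        rw [dcomm T τ₁ xu] at htri
        omega
      by_cases hpq : T.dist v u = T.dist v w
      · obtain ⟨τ₂, hτ₂L, hτ₂b⟩ := hland xw axw
        have hτ₂b' : T.dist v τ₂ = T.dist xw τ₂ + 1 := hτ₂b
        refine ⟨τ₁, hτ₁L, τ₂, hτ₂L, hτne axu axw hxx hτ₁b hτ₂b, hsep1, ?_⟩
        show T.dist τ₂ u ≠ T.dist τ₂ w
        rw [cross_dist hT axu axw hxx hub hτ₂b]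
        have htri : T.dist τ₂ w ≤ T.dist τ₂ xw + T.dist xw w :=
          hT.isConnected.dist_triangle
        rw [dcomm T τ₂ xw] at htri
        omega
      · obtain ⟨y, hyu, hyw, ay⟩ := pick1 xu xw
        obtain ⟨τ₂, hτ₂L, hτ₂b⟩ := hland y ay
        refine ⟨τ₁, hτ₁L, τ₂, hτ₂L,
          hτne axu ay (fun hh => hyu hh.symm) hτ₁b hτ₂b, hsep1, ?_⟩
        show T.dist τ₂ u ≠ T.dist τ₂ w
        rw [cross_dist hT axu ay (fun hh => hyu hh.symm) hub hτ₂b,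
          cross_dist hT axw ay (fun hh => hyw hh.symm) hwb hτ₂b]
        omega

end MainAux


/-- a tree with exactly one core `v` having at least three g-legs; if `L`
contains a local set for `v` and at least one vertex of each g-leg of `v`, then `L`
is a landmark set. -/
theorem one_core_vertex_on_each_gleg_landmark
    (T : SimpleGraph V) [DecidableRel T.Adj] (hT : T.IsTree)
    (v : V) (hv : IsCore T v) (huniq : ∀ w : V, IsCore T w → w = v)
    (hlegs : ∃ x₁ x₂ x₃ : V, x₁ ≠ x₂ ∧ x₁ ≠ x₃ ∧ x₂ ≠ x₃ ∧
      IsGLeg T v x₁ ∧ IsGLeg T v x₂ ∧ IsGLeg T v x₃)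
    (L : Set V) (hloc : ∃ S : Set V, S ⊆ L ∧ IsLocalSet T v S)
    (hall : ∀ x : V, IsGLeg T v x → ∃ w ∈ L, w ∈ Branch T v x) :
    IsLandmarkSet T L := by
  have hdeg : ∀ z : V, 3 ≤ T.degree z → z = v := fun z hz => huniq z hz
  have hadjleg : ∀ x : V, IsGLeg T v x → T.Adj v x := by
    intro x hx
    rcases hx with h | h
    · exact h.1
    · exact h.1
  have hland : ∀ x : V, T.Adj v x → ∃ τ ∈ L, τ ∈ Branch T v x := by
    intro x hx
    apply hall
    left
    refine ⟨hx, ?_⟩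
    intro z hz
    by_contra hcon
    push_neg at hcon
    have h3 : 3 ≤ T.degree z := hcon
    have hzv := hdeg z h3
    have hz' : T.dist v z = T.dist x z + 1 := hz
    rw [hzv, SimpleGraph.dist_self] at hz'
    omega
  obtain ⟨x₁, x₂, x₃, h12, h13, h23, g1, g2, g3⟩ := hlegs
  have a1 := hadjleg x₁ g1
  have a2 := hadjleg x₂ g2
  have a3 := hadjleg x₃ g3
  intro u w hne huL hwL
  rcases le_total (T.dist v u) (T.dist v w) with h | h
  · exact main_aux hT hdeg h12 h13 h23 a1 a2 a3 hland h hne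
  · exact hasTwoSeparators_symm
      (main_aux hT hdeg h12 h13 h23 a1 a2 a3 hland h hne.symm)
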